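/- Let G be a graph and δ a surjective red-blue edge coloring such that there is a cycle C in G with exactly one edge e of one color and all other edges of the other color (an almost monochromatic cycle). Then some connected component of the subgraph induced by the edges of the majority color of C is not an induced subgraph of G. -/

import Mathlib

open SimpleGraph

def IsNACColoring {V : Type*} (G : SimpleGraph V) (δ : Sym2 V → Bool) : Prop :=
  (∃ e ∈ G.edgeSet, δ e = true) ∧ (∃ e ∈ G.edgeSet, δ e = false) ∧
  ∀ ⦃u : V⦄ (w : G.Walk u u), w.IsCycle →
    ∀ b : Bool, (w.edges.countP fun e => δ e == b) ≠ 1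

/-- The spanning subgraph of `G` consisting of the edges of color `c`. -/
def colorSubgraph {V : Type*} (G : SimpleGraph V) (δ : Sym2 V → Bool) (c : Bool) :
    SimpleGraph V :=
  SimpleGraph.fromEdgeSet {e | e ∈ G.edgeSet ∧ δ e = c}

/-- if a surjective red-blue edge coloring admits an almost
monochromatic cycle (a cycle with exactly one edge of color `b`), then some connected
component of the subgraph of the edges of the majority color `!b` is not an induced
subgraph of `G`: there are vertices joined in `G` and connected in the majority-color
subgraph whose connecting edge has the minority color. -/
theorem almost_cycle_component_not_induced {V : Type*} (G : SimpleGraph V)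
    (δ : Sym2 V → Bool)
    (hsurj : (∃ e ∈ G.edgeSet, δ e = true) ∧ (∃ e ∈ G.edgeSet, δ e = false))
    (u : V) (w : G.Walk u u) (hw : w.IsCycle) (b : Bool)
    (hone : (w.edges.countP fun e => δ e == b) = 1) :
    ∃ x y : V, G.Adj x y ∧ (colorSubgraph G δ (!b)).Reachable x y ∧ δ s(x, y) = b := by
  classical
  rw [List.countP_eq_length_filter] at hone
  obtain ⟨e₀, he₀⟩ := List.length_eq_one_iff.mp hone
  have he₀mem : e₀ ∈ w.edges.filter (fun e => δ e == b) := by rw [he₀]; simp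
  rw [List.mem_filter] at he₀mem
  obtain ⟨he₀w, he₀b'⟩ := he₀mem
  have he₀b : δ e₀ = b := by simpa using he₀b'
  have hother : ∀ e ∈ w.edges, e ≠ e₀ → δ e = !b := by
    intro e hew hne
    have h : δ e ≠ b := by
      intro hb
      apply hne
      have : e ∈ w.edges.filter (fun e => δ e == b) :=
        List.mem_filter.mpr ⟨hew, by simp [hb]⟩
      rw [he₀] at this; simpa using this
    exact Bool.eq_not_iff.mpr h
  have he₀G : e₀ ∈ G.edgeSet := w.edges_subset_edgeSet he₀w
  -- the auxiliary graph containing all !b edges of G plus e₀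
  set G' : SimpleGraph V := colorSubgraph G δ (!b) ⊔ fromEdgeSet {e₀} with hG'
  have hedges : ∀ e ∈ w.edges, e ∈ G'.edgeSet := by
    intro e hew
    have heG : e ∈ G.edgeSet := w.edges_subset_edgeSet hew
    have hnd : ¬ e.IsDiag := G.not_isDiag_of_mem_edgeSet heG
    rw [hG', edgeSet_sup]
    by_cases hne : e = e₀
    · right
      rw [edgeSet_fromEdgeSet]
      exact ⟨by simp [hne], hnd⟩
    · left
      rw [colorSubgraph, edgeSet_fromEdgeSet]
      exact ⟨⟨heG, hother e hew hne⟩, hnd⟩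
  have hcyc' : (w.transfer G' hedges).IsCycle := hw.transfer hedges
  -- get the endpoints of e₀
  induction e₀ using Sym2.ind with
  | _ x y =>
    have hmem' : s(x, y) ∈ (w.transfer G' hedges).edges := by
      rw [Walk.edges_transfer]; exact he₀w
    have key := adj_and_reachable_delete_edges_iff_exists_cycle.mpr
      ⟨u, w.transfer G' hedges, hcyc', hmem'⟩
    obtain ⟨hadj', hreach'⟩ := key
    refine ⟨x, y, (G.mem_edgeSet).mp he₀G, ?_, he₀b⟩
    refine hreach'.mono ?_
    intro a c hac
    rw [deleteEdges, sdiff_adj] at hac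
    obtain ⟨hac1, hac2⟩ := hac
    rw [hG', sup_adj] at hac1
    rcases hac1 with h | h
    · exact h
    · exact absurd h hac2
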